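/- Let M be a finite matroid of rank d on a ground set E, and let c : E → {1,...,d} be a coloring of its elements in d colors. If for every color i ∈ {1,...,d} there exists a basis of M all of whose elements have color i (a monochromatic basis in color i), then there exists a basis B of M whose elements have pairwise distinct colors (a colorful basis). -/

import Mathlib

/-- **Colorful basis in a matroid.** Let `M` be a finite matroid of rank `d` (every base has
`d` elements) whose elements are colored with `d` colors. If for every color there is a
monochromatic base in that color, then there is a colorful base, i.e. a base whose elements
have pairwise distinct colors. -/
theorem exists_colorful_base {α : Type*} (M : Matroid α) [M.Finite]
    (d : ℕ) (hrank : ∀ B, M.IsBase B → B.ncard = d)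
    (c : α → Fin d)
    (hmono : ∀ i : Fin d, ∃ B, M.IsBase B ∧ ∀ e ∈ B, c e = i) :
    ∃ B, M.IsBase B ∧ Set.InjOn c B := by
  classical
  -- take a base maximizing the number of distinct colors
  set P : ℕ → Prop := fun n => ∃ B, M.IsBase B ∧ (c '' B).ncard = n with hP
  obtain ⟨B₀, hB₀⟩ := M.exists_isBase
  have hbound : ∀ B, M.IsBase B → (c '' B).ncard ≤ d := by
    intro B hB
    calc (c '' B).ncard ≤ B.ncard := Set.ncard_image_le hB.finite
    _ = d := hrank B hB
  set N := Nat.findGreatest P d with hN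
  have hPN : P N := Nat.findGreatest_spec (m := (c '' B₀).ncard)
    (hbound B₀ hB₀) ⟨B₀, hB₀, rfl⟩
  obtain ⟨B, hB, hcard⟩ := hPN
  refine ⟨B, hB, ?_⟩
  by_contra hninj
  -- find two elements of B with the same color
  simp only [Set.InjOn] at hninj
  push_neg at hninj
  obtain ⟨x₁, hx₁, x₂, hx₂, hcx, hne⟩ := hninj
  -- find a missing color i
  have hBfin : B.Finite := hB.finite
  have hlt : (c '' B).ncard < d := by
    rcases lt_or_eq_of_le (hbound B hB) with h | h
    · exact h
    · exact absurd (Set.injOn_of_ncard_image_eq (h.trans (hrank B hB).symm) hBfin hx₁ hx₂ hcx) hne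
  have hssub : c '' B ≠ Set.univ := by
    intro h
    rw [h, Set.ncard_univ, Nat.card_eq_fintype_card, Fintype.card_fin] at hlt
    exact lt_irrefl _ hlt
  obtain ⟨i, hi⟩ : ∃ i : Fin d, i ∉ c '' B := by
    by_contra h
    push_neg at h
    exact hssub (Set.eq_univ_of_forall fun j => h j)
  obtain ⟨Bi, hBi, hBic⟩ := hmono i
  -- x₁ is not in Bi
  have hx₁Bi : x₁ ∉ Bi := fun h => hi ⟨x₁, hx₁, hBic x₁ h⟩
  obtain ⟨y, hy, hB'⟩ := hB.exchange hBi ⟨hx₁, hx₁Bi⟩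
  set B' := insert y (B \ {x₁}) with hB'def
  -- the image of B' strictly contains the image of B
  have himB : c '' B ⊆ c '' (B \ {x₁}) := by
    rintro z ⟨w, hw, rfl⟩
    rcases eq_or_ne w x₁ with rfl | hwx
    · exact ⟨x₂, ⟨hx₂, fun h => hne (Set.mem_singleton_iff.mp h).symm⟩, hcx.symm⟩
    · exact ⟨w, ⟨hw, hwx⟩, rfl⟩
  have himB' : insert i (c '' B) ⊆ c '' B' := by
    rintro z hz
    rcases hz with rfl | hz
    · exact ⟨y, Set.mem_insert _ _, hBic y hy.1⟩
    · obtain ⟨w, hw, rfl⟩ := himB hz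
      exact ⟨w, Set.mem_insert_of_mem _ hw, rfl⟩
  have hcard' : N + 1 ≤ (c '' B').ncard := by
    have h1 : (insert i (c '' B)).ncard = N + 1 := by
      rw [Set.ncard_insert_of_notMem hi (hBfin.image c), hcard]
    calc N + 1 = (insert i (c '' B)).ncard := h1.symm
    _ ≤ (c '' B').ncard := Set.ncard_le_ncard himB' (hB'.finite.image c)
  have : N + 1 ≤ N :=
    Nat.le_findGreatest (hbound B' hB') ⟨B', hB', rfl⟩ |>.trans' hcard' |>.trans_eq rfl
  omega
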